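/- Consider an L-layered feedforward neural network class F^NN as defined in the context, with every weight vector satisfying ‖w_m^{(ℓ)}‖₁ ≤ b, every bias satisfying |θ_m^{(ℓ)}| ≤ a, input vectors h_1,…,h_N ∈ ℝ^{n_0} satisfying ‖h_n‖_∞ ≤ c, and activation function σ that is Lipschitz with constant L_σ and satisfies σ(0) = 0. Then the empirical Rademacher average satisfies R(F^NN(h_1^N)) ≤ (2/√N)·[ (2 b L_σ)^{L−1} · b c · √(2 log(2 n_0)) + Σ_{ℓ=0}^{L−1} (2 b L_σ)^ℓ · a ]. -/

import Mathlib

/-- The real sign `±1` associated with a Boolean: `true ↦ +1`, `false ↦ −1`. -/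
def rsign (b : Bool) : ℝ := if b then 1 else -1

/-- The output of node `m` of layer `ℓ+1` (paper numbering: layer `ℓ+1 ∈ {1,…,L}`) of a
feedforward neural network with activation `σ`, layer sizes `n 0, n 1, …` (with `n 0` the
input dimension), weight matrices `W` and bias vectors `θ`, on input `h`:
`g^{(1)}_m(h) = Σ_j W^{(1)}_{mj} h_j − θ^{(1)}_m` and
`g^{(ℓ)}_m(h) = Σ_j W^{(ℓ)}_{mj} σ(g^{(ℓ−1)}_j(h)) − θ^{(ℓ)}_m` for `ℓ ≥ 2`. -/
noncomputable def layerOut (σ : ℝ → ℝ) (n : ℕ → ℕ)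
    (W : ∀ ℓ : ℕ, Fin (n (ℓ + 1)) → Fin (n ℓ) → ℝ)
    (θ : ∀ ℓ : ℕ, Fin (n (ℓ + 1)) → ℝ)
    (h : Fin (n 0) → ℝ) : (ℓ : ℕ) → Fin (n (ℓ + 1)) → ℝ
  | 0 => fun m => (∑ j, W 0 m j * h j) - θ 0 m
  | (ℓ + 1) => fun m => (∑ j, W (ℓ + 1) m j * σ (layerOut σ n W θ h ℓ j)) - θ (ℓ + 1) m

lemma abs_rsign (b : Bool) : |rsign b| = 1 := by cases b <;> simp [rsign]
lemma rsign_not (b : Bool) : rsign (!b) = - rsign b := by cases b <;> simp [rsign]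
lemma rsign_sq (b : Bool) : rsign b * rsign b = 1 := by cases b <;> norm_num [rsign]
lemma bddAbove_of_le {P : Type*} {f : P → ℝ} (M : ℝ) (hf : ∀ p, f p ≤ M) :
    BddAbove (Set.range f) := ⟨M, by rintro y ⟨p, rfl⟩; exact hf p⟩
lemma my_ciSup_add_ciSup_le {P : Type*} [Nonempty P] {f g : P → ℝ} {M : ℝ}
    (h : ∀ p q, f p + g q ≤ M) : (⨆ p, f p) + (⨆ q, g q) ≤ M := by
  have hg : ∀ p, (⨆ q, g q) ≤ M - f p := fun p => ciSup_le (fun q => by linarith [h p q])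
  have hf : (⨆ p, f p) ≤ M - (⨆ q, g q) := ciSup_le (fun p => by linarith [hg p])
  linarith
lemma contraction_pair {P : Type*} [Nonempty P] {c x : P → ℝ} {φ : ℝ → ℝ} {Lσ : ℝ}
    (hφ : ∀ u v, |φ u - φ v| ≤ Lσ * |u - v|)
    (h1 : BddAbove (Set.range fun p => c p + Lσ * x p))
    (h2 : BddAbove (Set.range fun p => c p - Lσ * x p)) :
    (⨆ p, (c p + φ (x p))) + (⨆ p, (c p - φ (x p))) ≤
      (⨆ p, (c p + Lσ * x p)) + (⨆ p, (c p - Lσ * x p)) := by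
  apply my_ciSup_add_ciSup_le
  intro p q
  have habs := abs_le.1 (hφ (x p) (x q))
  rcases le_total (x q) (x p) with hle | hle
  · have h1' : c p + (Lσ * x p) ≤ ⨆ r, (c r + Lσ * x r) := le_ciSup h1 p
    have h2' : c q - (Lσ * x q) ≤ ⨆ r, (c r - Lσ * x r) := le_ciSup h2 q
    rw [abs_of_nonneg (by linarith : (0:ℝ) ≤ x p - x q)] at habs
    linarith [habs.2]
  · have h1' : c q + (Lσ * x q) ≤ ⨆ r, (c r + Lσ * x r) := le_ciSup h1 q
    have h2' : c p - (Lσ * x p) ≤ ⨆ r, (c r - Lσ * x r) := le_ciSup h2 p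
    rw [abs_of_nonpos (by linarith : x p - x q ≤ 0)] at habs
    linarith [habs.1]

lemma contraction_one_sided {P : Type*} [Nonempty P] {N : ℕ}
    (t : P → Fin N → ℝ) (K : ℝ) (hK : ∀ p i, |t p i| ≤ K)
    (φ : ℝ → ℝ) (Lσ : ℝ) (hLσ : 0 ≤ Lσ) (hφ : ∀ u v, |φ u - φ v| ≤ Lσ * |u - v|) :
    ∑ s : Fin N → Bool, ⨆ p, ∑ i, rsign (s i) * φ (t p i) ≤
      ∑ s : Fin N → Bool, ⨆ p, ∑ i, rsign (s i) * (Lσ * t p i) := by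
  classical
  set M : ℝ := max (Lσ * K + |φ 0|) 0 with hMdef
  have hM0 : 0 ≤ M := le_max_right _ _
  have hφb : ∀ (p : P) (i : Fin N), |φ (t p i)| ≤ M := by
    intro p i
    have h2 : |t p i - 0| ≤ K := by simpa using hK p i
    calc |φ (t p i)| = |φ (t p i) - φ 0 + φ 0| := by rw [sub_add_cancel]
      _ ≤ |φ (t p i) - φ 0| + |φ 0| := abs_add_le _ _
      _ ≤ Lσ * |t p i - 0| + |φ 0| := by linarith [hφ (t p i) 0]
      _ ≤ Lσ * K + |φ 0| := by nlinarith [mul_le_mul_of_nonneg_left h2 hLσ]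
      _ ≤ M := le_max_left _ _
  have hLb : ∀ (p : P) (i : Fin N), |Lσ * t p i| ≤ M := by
    intro p i
    rw [abs_mul, abs_of_nonneg hLσ]
    have h2 := mul_le_mul_of_nonneg_left (hK p i) hLσ
    have h3 : (0:ℝ) ≤ |φ 0| := abs_nonneg _
    have : Lσ * K + |φ 0| ≤ M := le_max_left _ _
    linarith
  set u : Finset (Fin N) → P → Fin N → ℝ :=
    fun A p i => if i ∈ A then φ (t p i) else Lσ * t p i with hu
  have hub : ∀ A (p : P) (i : Fin N), |u A p i| ≤ M := by
    intro A p i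
    by_cases hi : i ∈ A
    · simpa [hu, hi] using hφb p i
    · simpa [hu, hi] using hLb p i
  have hsb : ∀ (A) (s : Fin N → Bool) (p : P) (S : Finset (Fin N)),
      |∑ j ∈ S, rsign (s j) * u A p j| ≤ N * M := by
    intro A s p S
    calc |∑ j ∈ S, rsign (s j) * u A p j| ≤ ∑ j ∈ S, |rsign (s j) * u A p j| :=
          Finset.abs_sum_le_sum_abs _ _
      _ = ∑ j ∈ S, |u A p j| := by
          refine Finset.sum_congr rfl fun j _ => ?_
          rw [abs_mul, abs_rsign, one_mul]
      _ ≤ ∑ _j ∈ S, M := Finset.sum_le_sum fun j _ => hub A p j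
      _ = S.card * M := by rw [Finset.sum_const, nsmul_eq_mul]
      _ ≤ N * M := by
          have : (S.card : ℝ) ≤ N := by
            have := Finset.card_le_univ S
            exact_mod_cast (by simpa using this : S.card ≤ N)
          nlinarith
  set SS : Finset (Fin N) → ℝ :=
    fun A => ∑ s : Fin N → Bool, ⨆ p, ∑ j, rsign (s j) * u A p j with hSS
  have step : ∀ (A : Finset (Fin N)) (i : Fin N), i ∉ A → SS (insert i A) ≤ SS A := by
    intro A i hiA
    set e : (Fin N → Bool) → (Fin N → Bool) := fun s => Function.update s i (!(s i)) with he
    have hinv : Function.Involutive e := by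
      intro s; funext j
      by_cases hj : j = i
      · subst hj; simp [he]
      · simp [he, Function.update_of_ne hj]
    have hflipsum : ∀ F : (Fin N → Bool) → ℝ, ∑ s, F (e s) = ∑ s, F s := by
      intro F
      exact Fintype.sum_bijective e hinv.bijective _ _ (fun s => rfl)
    have hkey : ∀ s : Fin N → Bool,
        (⨆ p, ∑ j, rsign (s j) * u (insert i A) p j)
          + (⨆ p, ∑ j, rsign (e s j) * u (insert i A) p j)
        ≤ (⨆ p, ∑ j, rsign (s j) * u A p j)
          + (⨆ p, ∑ j, rsign (e s j) * u A p j) := by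
      intro s
      set c : P → ℝ := fun p => ∑ j ∈ Finset.univ.erase i, rsign (s j) * u A p j with hc
      set x : P → ℝ := fun p => t p i with hx
      have hes : ∀ j, j ≠ i → rsign (e s j) = rsign (s j) := by
        intro j hj; simp [he, Function.update_of_ne hj]
      have hesi : rsign (e s i) = - rsign (s i) := by
        simp [he, rsign_not]
      have huAi : ∀ p : P, u A p i = Lσ * x p := by
        intro p; simp [hu, hiA, hx]
      have huA'i : ∀ p : P, u (insert i A) p i = φ (x p) := by
        intro p; simp [hu, hx]
      have huoff : ∀ (p : P) (j), j ≠ i → u (insert i A) p j = u A p j := by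
        intro p j hj; simp [hu, Finset.mem_insert, hj]
      have e1 : (fun p : P => ∑ j, rsign (s j) * u (insert i A) p j)
          = fun p => c p + rsign (s i) * φ (x p) := by
        funext p
        rw [← Finset.add_sum_erase _ (fun j => rsign (s j) * u (insert i A) p j)
          (Finset.mem_univ i), huA'i]
        have : ∑ j ∈ Finset.univ.erase i, rsign (s j) * u (insert i A) p j = c p := by
          refine Finset.sum_congr rfl fun j hj => ?_
          rw [huoff p j (Finset.ne_of_mem_erase hj)]
        rw [this]; ring
      have e2 : (fun p : P => ∑ j, rsign (e s j) * u (insert i A) p j)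
          = fun p => c p - rsign (s i) * φ (x p) := by
        funext p
        rw [← Finset.add_sum_erase _ (fun j => rsign (e s j) * u (insert i A) p j)
          (Finset.mem_univ i), huA'i, hesi]
        have : ∑ j ∈ Finset.univ.erase i, rsign (e s j) * u (insert i A) p j = c p := by
          refine Finset.sum_congr rfl fun j hj => ?_
          rw [huoff p j (Finset.ne_of_mem_erase hj), hes j (Finset.ne_of_mem_erase hj)]
        rw [this]; ring
      have e3 : (fun p : P => ∑ j, rsign (s j) * u A p j)
          = fun p => c p + rsign (s i) * (Lσ * x p) := by
        funext p
        rw [← Finset.add_sum_erase _ (fun j => rsign (s j) * u A p j)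
          (Finset.mem_univ i), huAi]
        ring
      have e4 : (fun p : P => ∑ j, rsign (e s j) * u A p j)
          = fun p => c p - rsign (s i) * (Lσ * x p) := by
        funext p
        rw [← Finset.add_sum_erase _ (fun j => rsign (e s j) * u A p j)
          (Finset.mem_univ i), huAi, hesi]
        have : ∑ j ∈ Finset.univ.erase i, rsign (e s j) * u A p j = c p := by
          refine Finset.sum_congr rfl fun j hj => ?_
          rw [hes j (Finset.ne_of_mem_erase hj)]
        rw [this]; ring
      have hcb : ∀ p : P, |c p| ≤ N * M := fun p => hsb A s p _
      have hxb : ∀ p : P, |Lσ * x p| ≤ M := fun p => hLb p i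
      have b1 : BddAbove (Set.range fun p : P => c p + Lσ * x p) := by
        refine bddAbove_of_le (N * M + M) fun p => ?_
        have := abs_le.1 (hcb p); have := abs_le.1 (hxb p)
        have h1 := (abs_le.1 (hcb p)).2
        have h2 := (abs_le.1 (hxb p)).2
        linarith
      have b2 : BddAbove (Set.range fun p : P => c p - Lσ * x p) := by
        refine bddAbove_of_le (N * M + M) fun p => ?_
        have h1 := (abs_le.1 (hcb p)).2
        have h2 := (abs_le.1 (hxb p)).1
        linarith
      rw [e1, e2, e3, e4]
      rcases Bool.eq_false_or_eq_true (s i) with hsi | hsi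
      · have hr : rsign (s i) = 1 := by rw [hsi]; norm_num [rsign]
        have f1 : (fun p : P => c p + rsign (s i) * φ (x p)) = fun p => c p + φ (x p) := by
          funext p; rw [hr]; ring
        have f2 : (fun p : P => c p - rsign (s i) * φ (x p)) = fun p => c p - φ (x p) := by
          funext p; rw [hr]; ring
        have f3 : (fun p : P => c p + rsign (s i) * (Lσ * x p)) = fun p => c p + Lσ * x p := by
          funext p; rw [hr]; ring
        have f4 : (fun p : P => c p - rsign (s i) * (Lσ * x p)) = fun p => c p - Lσ * x p := by
          funext p; rw [hr]; ring
        rw [f1, f2, f3, f4]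
        exact contraction_pair hφ b1 b2
      · have hr : rsign (s i) = -1 := by rw [hsi]; norm_num [rsign]
        have f1 : (fun p : P => c p + rsign (s i) * φ (x p)) = fun p => c p - φ (x p) := by
          funext p; rw [hr]; ring
        have f2 : (fun p : P => c p - rsign (s i) * φ (x p)) = fun p => c p + φ (x p) := by
          funext p; rw [hr]; ring
        have f3 : (fun p : P => c p + rsign (s i) * (Lσ * x p)) = fun p => c p - Lσ * x p := by
          funext p; rw [hr]; ring
        have f4 : (fun p : P => c p - rsign (s i) * (Lσ * x p)) = fun p => c p + Lσ * x p := by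
          funext p; rw [hr]; ring
        rw [f1, f2, f3, f4]
        linarith [contraction_pair hφ b1 b2]
    have h2 : SS (insert i A) + SS (insert i A) ≤ SS A + SS A := by
      have l1 : SS (insert i A) + SS (insert i A)
          = ∑ s : Fin N → Bool, ((⨆ p, ∑ j, rsign (s j) * u (insert i A) p j)
              + (⨆ p, ∑ j, rsign (e s j) * u (insert i A) p j)) := by
        rw [Finset.sum_add_distrib]
        congr 1
        exact (hflipsum _).symm
      have l2 : SS A + SS A
          = ∑ s : Fin N → Bool, ((⨆ p, ∑ j, rsign (s j) * u A p j)
              + (⨆ p, ∑ j, rsign (e s j) * u A p j)) := by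
        rw [Finset.sum_add_distrib]
        congr 1
        exact (hflipsum _).symm
      rw [l1, l2]
      exact Finset.sum_le_sum fun s _ => hkey s
    linarith
  have hind : ∀ A : Finset (Fin N), SS A ≤ SS ∅ := by
    intro A
    induction A using Finset.induction_on with
    | empty => exact le_refl _
    | @insert i A hiA ih => exact (step A i hiA).trans ih
  have lhs_eq : ∑ s : Fin N → Bool, ⨆ p, ∑ i, rsign (s i) * φ (t p i) = SS Finset.univ := by
    refine Finset.sum_congr rfl fun s _ =>
      iSup_congr fun p => Finset.sum_congr rfl fun j _ => ?_
    simp [hu]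
  have rhs_eq : ∑ s : Fin N → Bool, ⨆ p, ∑ i, rsign (s i) * (Lσ * t p i) = SS ∅ := by
    refine Finset.sum_congr rfl fun s _ =>
      iSup_congr fun p => Finset.sum_congr rfl fun j _ => ?_
    simp [hu]
  rw [lhs_eq, rhs_eq]
  exact hind _

lemma contraction_abs {P : Type*} [Nonempty P] {N : ℕ}
    (t : P → Fin N → ℝ) (K : ℝ) (hK : ∀ p i, |t p i| ≤ K)
    (p0 : P) (hp0 : ∀ i, t p0 i = 0)
    (σ : ℝ → ℝ) (Lσ : ℝ) (hLσ : 0 ≤ Lσ)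
    (hlip : ∀ u v, |σ u - σ v| ≤ Lσ * |u - v|) (hσ0 : σ 0 = 0) :
    ∑ s : Fin N → Bool, ⨆ p, |∑ i, rsign (s i) * σ (t p i)| ≤
      2 * Lσ * ∑ s : Fin N → Bool, ⨆ p, |∑ i, rsign (s i) * t p i| := by
  classical
  have hσb : ∀ (p : P) (i : Fin N), |σ (t p i)| ≤ Lσ * K := by
    intro p i
    have := hlip (t p i) 0
    rw [hσ0, sub_zero, sub_zero] at this
    exact this.trans (mul_le_mul_of_nonneg_left (hK p i) hLσ)
  have habsb : ∀ (s : Fin N → Bool) (p : P) (v : P → Fin N → ℝ) (C : ℝ)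
      (hv : ∀ p i, |v p i| ≤ C), |∑ i, rsign (s i) * v p i| ≤ N * C := by
    intro s p v C hv
    calc |∑ i, rsign (s i) * v p i| ≤ ∑ i, |rsign (s i) * v p i| :=
          Finset.abs_sum_le_sum_abs _ _
      _ = ∑ i, |v p i| := by
          refine Finset.sum_congr rfl fun i _ => ?_
          rw [abs_mul, abs_rsign, one_mul]
      _ ≤ ∑ _i : Fin N, C := Finset.sum_le_sum fun i _ => hv p i
      _ = N * C := by rw [Finset.sum_const, nsmul_eq_mul, Finset.card_univ, Fintype.card_fin]
  -- bddAbove facts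
  have bdd1 : ∀ s : Fin N → Bool, BddAbove (Set.range fun p : P => ∑ i, rsign (s i) * σ (t p i)) :=
    fun s => bddAbove_of_le (N * (Lσ * K)) fun p =>
      (le_abs_self _).trans (habsb s p _ _ hσb)
  have bdd2 : ∀ s : Fin N → Bool, BddAbove (Set.range fun p : P => ∑ i, rsign (s i) * (- σ (t p i))) :=
    fun s => bddAbove_of_le (N * (Lσ * K)) fun p => by
      refine (le_abs_self _).trans (habsb s p (fun p i => - σ (t p i)) _ fun p i => ?_)
      rw [abs_neg]; exact hσb p i
  have bdd3 : ∀ s : Fin N → Bool, BddAbove (Set.range fun p : P => |∑ i, rsign (s i) * t p i|) :=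
    fun s => bddAbove_of_le (N * K) fun p => habsb s p _ _ hK
  have step1 : ∀ s : Fin N → Bool,
      (⨆ p, |∑ i, rsign (s i) * σ (t p i)|) ≤
        (⨆ p, ∑ i, rsign (s i) * σ (t p i)) + (⨆ p, ∑ i, rsign (s i) * (- σ (t p i))) := by
    intro s
    have hz1 : (0:ℝ) ≤ ⨆ p, ∑ i, rsign (s i) * σ (t p i) := by
      refine le_trans (le_of_eq ?_) (le_ciSup (bdd1 s) p0)
      rw [Finset.sum_eq_zero]
      intro i _; rw [hp0, hσ0, mul_zero]
    have hz2 : (0:ℝ) ≤ ⨆ p, ∑ i, rsign (s i) * (- σ (t p i)) := by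
      refine le_trans (le_of_eq ?_) (le_ciSup (bdd2 s) p0)
      rw [Finset.sum_eq_zero]
      intro i _; rw [hp0, hσ0, neg_zero, mul_zero]
    refine ciSup_le fun p => ?_
    rcases abs_cases (∑ i, rsign (s i) * σ (t p i)) with ⟨heq, _⟩ | ⟨heq, _⟩
    · rw [heq]
      exact le_add_of_le_of_nonneg (le_ciSup (bdd1 s) p) hz2
    · rw [heq]
      have : -∑ i, rsign (s i) * σ (t p i) = ∑ i, rsign (s i) * (- σ (t p i)) := by
        rw [← Finset.sum_neg_distrib]
        exact Finset.sum_congr rfl fun i _ => by ring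
      rw [this]
      exact le_add_of_nonneg_of_le hz1 (le_ciSup (bdd2 s) p)
  have step3 : ∀ φ : ℝ → ℝ, (∀ u v, |φ u - φ v| ≤ Lσ * |u - v|) →
      ∑ s : Fin N → Bool, ⨆ p, ∑ i, rsign (s i) * φ (t p i) ≤
        Lσ * ∑ s : Fin N → Bool, ⨆ p, |∑ i, rsign (s i) * t p i| := by
    intro φ hφ
    refine (contraction_one_sided t K hK φ Lσ hLσ hφ).trans ?_
    rw [Finset.mul_sum]
    refine Finset.sum_le_sum fun s _ => ?_
    refine ciSup_le fun p => ?_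
    have h1 : ∑ i, rsign (s i) * (Lσ * t p i) = Lσ * ∑ i, rsign (s i) * t p i := by
      rw [Finset.mul_sum]
      exact Finset.sum_congr rfl fun i _ => by ring
    rw [h1]
    refine mul_le_mul_of_nonneg_left ?_ hLσ
    exact (le_abs_self _).trans (le_ciSup (bdd3 s) p)
  have hminus : ∀ u v : ℝ, |(fun w => - σ w) u - (fun w => - σ w) v| ≤ Lσ * |u - v| := by
    intro u v
    simp only
    rw [show -σ u - -σ v = -(σ u - σ v) by ring, abs_neg]
    exact hlip u v
  calc ∑ s : Fin N → Bool, ⨆ p, |∑ i, rsign (s i) * σ (t p i)|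
      ≤ ∑ s : Fin N → Bool, ((⨆ p, ∑ i, rsign (s i) * σ (t p i))
          + (⨆ p, ∑ i, rsign (s i) * (- σ (t p i)))) :=
        Finset.sum_le_sum fun s _ => step1 s
    _ = (∑ s : Fin N → Bool, ⨆ p, ∑ i, rsign (s i) * σ (t p i))
          + ∑ s : Fin N → Bool, ⨆ p, ∑ i, rsign (s i) * ((fun w => - σ w) (t p i)) := by
        rw [Finset.sum_add_distrib]
    _ ≤ Lσ * (∑ s : Fin N → Bool, ⨆ p, |∑ i, rsign (s i) * t p i|)
          + Lσ * (∑ s : Fin N → Bool, ⨆ p, |∑ i, rsign (s i) * t p i|) := by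
        have g1 := step3 σ hlip
        have g2 := step3 (fun w => - σ w) hminus
        exact add_le_add g1 g2
    _ = 2 * Lσ * ∑ s : Fin N → Bool, ⨆ p, |∑ i, rsign (s i) * t p i| := by ring

lemma sum_rsign_mul_rsign {N : ℕ} (i j : Fin N) (hij : i ≠ j) :
    ∑ s : Fin N → Bool, rsign (s i) * rsign (s j) = 0 := by
  classical
  set e : (Fin N → Bool) → (Fin N → Bool) := fun s => Function.update s i (!(s i)) with he
  have hinv : Function.Involutive e := by
    intro s; funext k
    by_cases hk : k = i
    · subst hk; simp [he]
    · simp [he, Function.update_of_ne hk]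
  have h1 : ∑ s : Fin N → Bool, rsign (s i) * rsign (s j)
      = ∑ s : Fin N → Bool, rsign (e s i) * rsign (e s j) :=
    (Fintype.sum_bijective e hinv.bijective _ _ (fun s => rfl)).symm
  have h2 : ∀ s : Fin N → Bool, rsign (e s i) * rsign (e s j)
      = - (rsign (s i) * rsign (s j)) := by
    intro s
    have hi : e s i = !(s i) := by simp [he]
    have hj : e s j = s j := by simp [he, Function.update_of_ne (Ne.symm hij)]
    rw [hi, hj, rsign_not]; ring
  rw [Finset.sum_congr rfl (fun s _ => h2 s), Finset.sum_neg_distrib] at h1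
  linarith

lemma sum_sq_sum_rsign (N : ℕ) :
    ∑ s : Fin N → Bool, (∑ i, rsign (s i)) ^ 2 = 2 ^ N * N := by
  classical
  have expand : ∀ s : Fin N → Bool, (∑ i, rsign (s i)) ^ 2
      = ∑ i, ∑ j, rsign (s i) * rsign (s j) := by
    intro s
    rw [sq, Finset.sum_mul_sum]
  rw [Finset.sum_congr rfl (fun s _ => expand s), Finset.sum_comm]
  have swap2 : ∀ i : Fin N, ∑ s : Fin N → Bool, ∑ j, rsign (s i) * rsign (s j)
      = ∑ j, ∑ s : Fin N → Bool, rsign (s i) * rsign (s j) := fun i => Finset.sum_comm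
  rw [Finset.sum_congr rfl (fun i _ => swap2 i)]
  have hcard : (Finset.univ : Finset (Fin N → Bool)).card = 2 ^ N := by
    simp [Finset.card_univ]
  have inner : ∀ i : Fin N, ∑ j, ∑ s : Fin N → Bool, rsign (s i) * rsign (s j) = 2 ^ N := by
    intro i
    rw [← Finset.add_sum_erase _ _ (Finset.mem_univ i)]
    have hdiag : ∑ s : Fin N → Bool, rsign (s i) * rsign (s i) = 2 ^ N := by
      rw [Finset.sum_congr rfl (fun s _ => rsign_sq (s i)), Finset.sum_const, hcard]
      simp
    have hoff : ∑ j ∈ Finset.univ.erase i, ∑ s : Fin N → Bool, rsign (s i) * rsign (s j) = 0 := by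
      refine Finset.sum_eq_zero fun j hj => ?_
      exact sum_rsign_mul_rsign i j (Ne.symm (Finset.ne_of_mem_erase hj))
    rw [hdiag, hoff, add_zero]
  rw [Finset.sum_congr rfl (fun i _ => inner i), Finset.sum_const, Finset.card_univ,
    Fintype.card_fin, nsmul_eq_mul]
  ring

lemma khintchine (N : ℕ) :
    ∑ s : Fin N → Bool, |∑ i, rsign (s i)| ≤ 2 ^ N * Real.sqrt N := by
  classical
  have hcard : ((Finset.univ : Finset (Fin N → Bool)).card : ℝ) = 2 ^ N := by
    simp [Finset.card_univ]
  have cs : (∑ s : Fin N → Bool, |∑ i, rsign (s i)|) ^ 2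
      ≤ 2 ^ N * ∑ s : Fin N → Bool, |∑ i, rsign (s i)| ^ 2 := by
    have := sq_sum_le_card_mul_sum_sq (s := (Finset.univ : Finset (Fin N → Bool)))
      (f := fun s => |∑ i, rsign (s i)|)
    rw [hcard] at this
    exact this
  have h2 : ∑ s : Fin N → Bool, |∑ i, rsign (s i)| ^ 2 = 2 ^ N * N := by
    rw [Finset.sum_congr rfl (fun s _ => sq_abs _), sum_sq_sum_rsign]
  rw [h2] at cs
  have hnn : 0 ≤ ∑ s : Fin N → Bool, |∑ i, rsign (s i)| :=
    Finset.sum_nonneg fun s _ => abs_nonneg _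
  have : ∑ s : Fin N → Bool, |∑ i, rsign (s i)| ≤ Real.sqrt (2 ^ N * (2 ^ N * N)) := by
    rw [Real.le_sqrt hnn (by positivity)]
    exact cs
  refine this.trans (le_of_eq ?_)
  rw [show (2:ℝ) ^ N * (2 ^ N * (N:ℝ)) = ((2:ℝ) ^ N) ^ 2 * N by ring,
    Real.sqrt_mul (sq_nonneg _), Real.sqrt_sq (by positivity)]

lemma sum_pi_bool {N : ℕ} (f : Fin N → Bool → ℝ) :
    ∑ s : Fin N → Bool, ∏ i, f i (s i) = ∏ i, (f i false + f i true) := by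
  classical
  have := Fintype.prod_sum (κ := fun _ : Fin N => Bool) (f := f)
  rw [← this]
  refine Finset.prod_congr rfl fun i _ => ?_
  rw [Fintype.sum_bool]; ring

lemma exp_add_exp_neg_le (x : ℝ) : Real.exp x + Real.exp (-x) ≤ 2 * Real.exp (x ^ 2 / 2) := by
  have := Real.cosh_le_exp_half_sq x
  rw [Real.cosh_eq] at this
  linarith

lemma mgf_bound {N : ℕ} (u : Fin N → ℝ) (lam : ℝ) :
    ∑ s : Fin N → Bool, Real.exp (lam * ∑ i, rsign (s i) * u i)
      ≤ 2 ^ N * Real.exp (lam ^ 2 * (∑ i, (u i) ^ 2) / 2) := by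
  classical
  have expand : ∀ s : Fin N → Bool,
      Real.exp (lam * ∑ i, rsign (s i) * u i) = ∏ i, Real.exp (lam * (rsign (s i) * u i)) := by
    intro s
    rw [← Real.exp_sum]
    congr 1
    rw [Finset.mul_sum]
  rw [Finset.sum_congr rfl (fun s _ => expand s),
    sum_pi_bool (fun i b => Real.exp (lam * (rsign b * u i)))]
  have hle : ∀ i : Fin N, Real.exp (lam * (rsign false * u i)) + Real.exp (lam * (rsign true * u i))
      ≤ 2 * Real.exp ((lam * u i) ^ 2 / 2) := by
    intro i
    have h1 : lam * (rsign false * u i) = -(lam * u i) := by norm_num [rsign]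
    have h2 : lam * (rsign true * u i) = lam * u i := by norm_num [rsign]
    rw [h1, h2]
    linarith [exp_add_exp_neg_le (lam * u i)]
  calc ∏ i, (Real.exp (lam * (rsign false * u i)) + Real.exp (lam * (rsign true * u i)))
      ≤ ∏ i, 2 * Real.exp ((lam * u i) ^ 2 / 2) := by
        refine Finset.prod_le_prod (fun i _ => by positivity) fun i _ => hle i
    _ = 2 ^ N * ∏ i, Real.exp ((lam * u i) ^ 2 / 2) := by
        rw [Finset.prod_mul_distrib, Finset.prod_const, Finset.card_univ, Fintype.card_fin]
    _ = 2 ^ N * Real.exp (∑ i, (lam * u i) ^ 2 / 2) := by rw [Real.exp_sum]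
    _ = 2 ^ N * Real.exp (lam ^ 2 * (∑ i, (u i) ^ 2) / 2) := by
        congr 1
        rw [Finset.mul_sum, ← Finset.sum_div]
        congr 2
        exact Finset.sum_congr rfl fun i _ => by ring

lemma exp_mul_ciSup_le {Q : Type*} [Fintype Q] [Nonempty Q] (X : Q → ℝ) (lam : ℝ)
    (hlam : 0 < lam) :
    Real.exp (lam * ⨆ q, X q) ≤ ∑ q, Real.exp (lam * X q) := by
  have hZ : 0 < ∑ q, Real.exp (lam * X q) :=
    Finset.sum_pos (fun q _ => Real.exp_pos _) Finset.univ_nonempty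
  have hsup : (⨆ q, X q) ≤ Real.log (∑ q, Real.exp (lam * X q)) / lam := by
    refine ciSup_le fun q => ?_
    rw [le_div_iff₀ hlam]
    have h1 : Real.exp (lam * X q) ≤ ∑ r, Real.exp (lam * X r) :=
      Finset.single_le_sum (f := fun r => Real.exp (lam * X r))
        (fun r _ => (Real.exp_pos _).le) (Finset.mem_univ q)
    have h2 := Real.log_le_log (Real.exp_pos _) h1
    rw [Real.log_exp] at h2
    linarith
  calc Real.exp (lam * ⨆ q, X q)
      ≤ Real.exp (Real.log (∑ q, Real.exp (lam * X q))) := by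
        apply Real.exp_le_exp.2
        calc lam * ⨆ q, X q ≤ lam * (Real.log (∑ q, Real.exp (lam * X q)) / lam) :=
              mul_le_mul_of_nonneg_left hsup hlam.le
          _ = Real.log (∑ q, Real.exp (lam * X q)) := by field_simp
    _ = ∑ q, Real.exp (lam * X q) := Real.exp_log hZ

lemma sum_le_card_mul_log_div {ι : Type*} [Fintype ι] [Nonempty ι] (m : ι → ℝ) (lam B : ℝ)
    (hlam : 0 < lam)
    (h : ∑ x, Real.exp (lam * m x) ≤ (Fintype.card ι : ℝ) * B) :
    ∑ x, m x ≤ (Fintype.card ι : ℝ) * (Real.log B / lam) := by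
  have hcard : (0:ℝ) < (Fintype.card ι : ℝ) := by exact_mod_cast Fintype.card_pos
  have hpos : 0 < ∑ x, Real.exp (lam * m x) :=
    Finset.sum_pos (fun x _ => Real.exp_pos _) Finset.univ_nonempty
  have hB : 0 < B := by nlinarith
  have hgm := Real.geom_mean_le_arith_mean_weighted Finset.univ
    (fun _ : ι => ((Fintype.card ι : ℝ))⁻¹) (fun x => Real.exp (lam * m x))
    (fun x _ => by positivity)
    (by rw [Finset.sum_const, nsmul_eq_mul, Finset.card_univ]; field_simp)
    (fun x _ => (Real.exp_pos _).le)
  have hprod : ∏ x : ι, Real.exp (lam * m x) ^ (((Fintype.card ι : ℝ))⁻¹ : ℝ)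
      = Real.exp (lam * ((∑ x, m x) / (Fintype.card ι : ℝ))) := by
    rw [Finset.prod_congr rfl (fun x (_ : x ∈ Finset.univ) => (Real.exp_mul _ _).symm),
      ← Real.exp_sum]
    congr 1
    rw [← Finset.sum_mul, ← Finset.mul_sum, div_eq_mul_inv]
    ring
  have hrhs : ∑ x : ι, ((Fintype.card ι : ℝ))⁻¹ * Real.exp (lam * m x) ≤ B := by
    rw [← Finset.mul_sum]
    have h2 : ((Fintype.card ι : ℝ))⁻¹ * (∑ x, Real.exp (lam * m x))
        ≤ ((Fintype.card ι : ℝ))⁻¹ * ((Fintype.card ι : ℝ) * B) :=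
      mul_le_mul_of_nonneg_left h (by positivity)
    have h3 : ((Fintype.card ι : ℝ))⁻¹ * ((Fintype.card ι : ℝ) * B) = B := by field_simp
    linarith
  have hexp : Real.exp (lam * ((∑ x, m x) / (Fintype.card ι : ℝ))) ≤ B := by
    calc Real.exp (lam * ((∑ x, m x) / (Fintype.card ι : ℝ)))
        = ∏ x : ι, Real.exp (lam * m x) ^ (((Fintype.card ι : ℝ))⁻¹ : ℝ) := hprod.symm
      _ ≤ ∑ x : ι, ((Fintype.card ι : ℝ))⁻¹ * Real.exp (lam * m x) := hgm
      _ ≤ B := hrhs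
  have hlog := Real.log_le_log (Real.exp_pos _) hexp
  rw [Real.log_exp] at hlog
  have h2 : (∑ x, m x) / (Fintype.card ι : ℝ) ≤ Real.log B / lam := by
    rw [le_div_iff₀ hlam]
    calc (∑ x, m x) / (Fintype.card ι : ℝ) * lam
        = lam * ((∑ x, m x) / (Fintype.card ι : ℝ)) := by ring
      _ ≤ Real.log B := hlog
  have h4 : (∑ x, m x) = (Fintype.card ι : ℝ) * ((∑ x, m x) / (Fintype.card ι : ℝ)) := by
    field_simp
  rw [h4]
  exact mul_le_mul_of_nonneg_left h2 hcard.le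

lemma massart {N k : ℕ} (hk : 0 < k) (v : Fin k → Fin N → ℝ) (D : ℝ)
    (hv : ∀ j, ∑ i, (v j i) ^ 2 ≤ D) :
    ∑ s : Fin N → Bool, (⨆ j : Fin k, |∑ i, rsign (s i) * v j i|)
      ≤ 2 ^ N * (Real.sqrt D * Real.sqrt (2 * Real.log (2 * k))) := by
  classical
  haveI : Nonempty (Fin k) := ⟨⟨0, hk⟩⟩
  by_cases hD : D ≤ 0
  · have hvz : ∀ j i, v j i = 0 := by
      intro j i
      have h2 : ∀ i ∈ Finset.univ, (0:ℝ) ≤ (v j i) ^ 2 := fun i _ => sq_nonneg _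
      have h5 : (0:ℝ) ≤ ∑ i, (v j i) ^ 2 := Finset.sum_nonneg h2
      have h4 : ∑ i, (v j i) ^ 2 = 0 := le_antisymm ((hv j).trans hD) h5
      have h3 := (Finset.sum_eq_zero_iff_of_nonneg h2).1 h4 i (Finset.mem_univ i)
      exact pow_eq_zero_iff (by norm_num) |>.1 h3
    have hz : ∀ s : Fin N → Bool, (⨆ j : Fin k, |∑ i, rsign (s i) * v j i|) = 0 := by
      intro s
      have hj : ∀ j : Fin k, |∑ i, rsign (s i) * v j i| = 0 := by
        intro j
        rw [Finset.sum_eq_zero (fun i _ => by rw [hvz, mul_zero]), abs_zero]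
      rw [funext hj]
      exact ciSup_const
    rw [Finset.sum_congr rfl fun s _ => hz s, Finset.sum_const]
    simp only [smul_zero]
    positivity
  push_neg at hD
  have hG : 0 < Real.log (2 * (k:ℝ)) := by
    apply Real.log_pos
    have : (1:ℝ) ≤ (k:ℝ) := by exact_mod_cast hk
    linarith
  set G := Real.log (2 * (k:ℝ)) with hGdef
  have hu0 : 0 < Real.sqrt (2 * G * D) := Real.sqrt_pos.2 (by positivity)
  set u0 := Real.sqrt (2 * G * D) with hu0def
  have hu2 : u0 ^ 2 = 2 * G * D := Real.sq_sqrt (by positivity)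
  have hlam : 0 < u0 / D := by positivity
  set lam := u0 / D with hlamdef
  have hvb : ∀ (j : Fin k) (i : Fin N), |v j i| ≤ Real.sqrt D := by
    intro j i
    rw [← Real.sqrt_sq_eq_abs]
    apply Real.sqrt_le_sqrt
    exact le_trans (Finset.single_le_sum (f := fun i => (v j i) ^ 2)
      (fun i _ => sq_nonneg _) (Finset.mem_univ i)) (hv j)
  have hXb : ∀ (s : Fin N → Bool) (q : Fin k × Bool),
      |∑ i, rsign (s i) * (rsign q.2 * v q.1 i)| ≤ N * Real.sqrt D := by
    intro s q
    calc |∑ i, rsign (s i) * (rsign q.2 * v q.1 i)|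
        ≤ ∑ i, |rsign (s i) * (rsign q.2 * v q.1 i)| := Finset.abs_sum_le_sum_abs _ _
      _ = ∑ i, |v q.1 i| := by
          refine Finset.sum_congr rfl fun i _ => ?_
          rw [abs_mul, abs_mul, abs_rsign, abs_rsign, one_mul, one_mul]
      _ ≤ ∑ _i : Fin N, Real.sqrt D := Finset.sum_le_sum fun i _ => hvb q.1 i
      _ = N * Real.sqrt D := by
          rw [Finset.sum_const, nsmul_eq_mul, Finset.card_univ, Fintype.card_fin]
  have bddm : ∀ s : Fin N → Bool,
      BddAbove (Set.range fun q : Fin k × Bool => ∑ i, rsign (s i) * (rsign q.2 * v q.1 i)) :=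
    fun s => bddAbove_of_le (N * Real.sqrt D) fun q => (le_abs_self _).trans (hXb s q)
  have step_abs : ∀ s : Fin N → Bool,
      (⨆ j : Fin k, |∑ i, rsign (s i) * v j i|)
        ≤ ⨆ q : Fin k × Bool, ∑ i, rsign (s i) * (rsign q.2 * v q.1 i) := by
    intro s
    refine ciSup_le fun j => ?_
    have h1 : ∑ i, rsign (s i) * v j i
        ≤ ⨆ q : Fin k × Bool, ∑ i, rsign (s i) * (rsign q.2 * v q.1 i) := by
      refine le_trans (le_of_eq ?_) (le_ciSup (bddm s) (j, true))
      refine Finset.sum_congr rfl fun i _ => ?_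
      norm_num [rsign]
    have h2 : -(∑ i, rsign (s i) * v j i)
        ≤ ⨆ q : Fin k × Bool, ∑ i, rsign (s i) * (rsign q.2 * v q.1 i) := by
      refine le_trans (le_of_eq ?_) (le_ciSup (bddm s) (j, false))
      rw [← Finset.sum_neg_distrib]
      refine Finset.sum_congr rfl fun i _ => ?_
      norm_num [rsign]
    exact abs_le.2 ⟨by linarith, h1⟩
  -- the exponential moment bound
  have hcard : (Fintype.card (Fin N → Bool) : ℝ) = 2 ^ N := by simp
  have hmoment : ∑ s : Fin N → Bool,
      Real.exp (lam * ⨆ q : Fin k × Bool, ∑ i, rsign (s i) * (rsign q.2 * v q.1 i))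
        ≤ (Fintype.card (Fin N → Bool) : ℝ) * (2 * k * Real.exp (lam ^ 2 * D / 2)) := by
    have h1 : ∀ s : Fin N → Bool,
        Real.exp (lam * ⨆ q : Fin k × Bool, ∑ i, rsign (s i) * (rsign q.2 * v q.1 i))
          ≤ ∑ q : Fin k × Bool, Real.exp (lam * ∑ i, rsign (s i) * (rsign q.2 * v q.1 i)) :=
      fun s => exp_mul_ciSup_le _ lam hlam
    calc ∑ s : Fin N → Bool,
        Real.exp (lam * ⨆ q : Fin k × Bool, ∑ i, rsign (s i) * (rsign q.2 * v q.1 i))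
        ≤ ∑ s : Fin N → Bool, ∑ q : Fin k × Bool,
            Real.exp (lam * ∑ i, rsign (s i) * (rsign q.2 * v q.1 i)) :=
          Finset.sum_le_sum fun s _ => h1 s
      _ = ∑ q : Fin k × Bool, ∑ s : Fin N → Bool,
            Real.exp (lam * ∑ i, rsign (s i) * (rsign q.2 * v q.1 i)) := Finset.sum_comm
      _ ≤ ∑ _q : Fin k × Bool, 2 ^ N * Real.exp (lam ^ 2 * D / 2) := by
          refine Finset.sum_le_sum fun q _ => ?_
          refine (mgf_bound (fun i => rsign q.2 * v q.1 i) lam).trans ?_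
          have hsq : ∑ i, (rsign q.2 * v q.1 i) ^ 2 = ∑ i, (v q.1 i) ^ 2 := by
            refine Finset.sum_congr rfl fun i _ => ?_
            rw [mul_pow, show rsign q.2 ^ 2 = 1 by cases q.2 <;> norm_num [rsign], one_mul]
          refine mul_le_mul_of_nonneg_left ?_ (by positivity)
          apply Real.exp_le_exp.2
          rw [hsq]
          have := hv q.1
          nlinarith [sq_nonneg lam]
      _ = (Fintype.card (Fin N → Bool) : ℝ) * (2 * k * Real.exp (lam ^ 2 * D / 2)) := by
          rw [Finset.sum_const, nsmul_eq_mul, Finset.card_univ, hcard]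
          have hcard2 : (Fintype.card (Fin k × Bool) : ℝ) = 2 * k := by
            simp [Fintype.card_prod]; ring
          rw [hcard2]
          ring
  have hmain := sum_le_card_mul_log_div
    (fun s : Fin N → Bool => ⨆ q : Fin k × Bool, ∑ i, rsign (s i) * (rsign q.2 * v q.1 i))
    lam (2 * k * Real.exp (lam ^ 2 * D / 2)) hlam hmoment
  rw [hcard] at hmain
  -- simplify the log bound
  have hk1 : (0:ℝ) < 2 * (k:ℝ) := by
    have : (1:ℝ) ≤ (k:ℝ) := by exact_mod_cast hk
    linarith
  have hlogB : Real.log (2 * k * Real.exp (lam ^ 2 * D / 2)) = G + lam ^ 2 * D / 2 := by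
    rw [Real.log_mul (ne_of_gt hk1) (ne_of_gt (Real.exp_pos _)), Real.log_exp, hGdef]
  have hD' : D ≠ 0 := ne_of_gt hD
  have hu0' : u0 ≠ 0 := ne_of_gt hu0
  have h1 : lam * D = u0 := by rw [hlamdef]; field_simp
  have h2 : G / lam = u0 / 2 := by
    rw [hlamdef, div_div_eq_mul_div, eq_div_iff (by norm_num : (2:ℝ) ≠ 0)]
    rw [div_mul_eq_mul_div, div_eq_iff hu0']
    nlinarith [hu2]
  have harith : (G + lam ^ 2 * D / 2) / lam = u0 := by
    rw [add_div]
    have h3 : lam ^ 2 * D / 2 / lam = lam * D / 2 := by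
      field_simp
    rw [h3, h2, h1]
    ring
  rw [hlogB, harith] at hmain
  have hsplit : u0 = Real.sqrt D * Real.sqrt (2 * G) := by
    rw [hu0def, show 2 * G * D = D * (2 * G) by ring, Real.sqrt_mul hD.le]
  calc ∑ s : Fin N → Bool, (⨆ j : Fin k, |∑ i, rsign (s i) * v j i|)
      ≤ ∑ s : Fin N → Bool,
          ⨆ q : Fin k × Bool, ∑ i, rsign (s i) * (rsign q.2 * v q.1 i) :=
        Finset.sum_le_sum fun s _ => step_abs s
    _ ≤ 2 ^ N * u0 := hmain
    _ = 2 ^ N * (Real.sqrt D * Real.sqrt (2 * G)) := by rw [hsplit]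

noncomputable def layerB (a b c Lσ : ℝ) : ℕ → ℝ
  | 0 => b * c + a
  | (ℓ + 1) => b * (Lσ * layerB a b c Lσ ℓ) + a

lemma layerB_nonneg {a b c Lσ : ℝ} (ha : 0 ≤ a) (hb : 0 ≤ b) (hc : 0 ≤ c) (hLσ : 0 ≤ Lσ) :
    ∀ ℓ, 0 ≤ layerB a b c Lσ ℓ
  | 0 => by rw [layerB]; positivity
  | (ℓ + 1) => by
      rw [layerB]
      have := layerB_nonneg ha hb hc hLσ ℓ
      positivity

lemma layerOut_zero (σ : ℝ → ℝ) (n : ℕ → ℕ) (h : Fin (n 0) → ℝ) :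
    ∀ ℓ (m : Fin (n (ℓ + 1))),
      layerOut σ n (fun _ _ _ => 0) (fun _ _ => 0) h ℓ m = 0
  | 0, m => by simp [layerOut]
  | (ℓ + 1), m => by simp [layerOut]

lemma layerOut_bound {σ : ℝ → ℝ} {n : ℕ → ℕ} {a b c Lσ : ℝ}
    (hLσ : 0 ≤ Lσ) (hlip : ∀ s t, |σ s - σ t| ≤ Lσ * |s - t|) (hσ0 : σ 0 = 0)
    (ha : 0 ≤ a) (hb : 0 ≤ b) (hc : 0 ≤ c)
    {W : ∀ ℓ : ℕ, Fin (n (ℓ + 1)) → Fin (n ℓ) → ℝ} {θ : ∀ ℓ : ℕ, Fin (n (ℓ + 1)) → ℝ}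
    (hW : ∀ ℓ m, ∑ j, |W ℓ m j| ≤ b) (hθ : ∀ ℓ m, |θ ℓ m| ≤ a)
    {h : Fin (n 0) → ℝ} (hh : ∀ j, |h j| ≤ c) :
    ∀ ℓ (m : Fin (n (ℓ + 1))), |layerOut σ n W θ h ℓ m| ≤ layerB a b c Lσ ℓ := by
  intro ℓ
  induction ℓ with
  | zero =>
    intro m
    rw [layerOut, layerB]
    calc |(∑ j, W 0 m j * h j) - θ 0 m| ≤ |∑ j, W 0 m j * h j| + |θ 0 m| := abs_sub _ _
      _ ≤ (∑ j, |W 0 m j| * c) + a := by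
          refine add_le_add (le_trans (Finset.abs_sum_le_sum_abs _ _)
            (Finset.sum_le_sum fun j _ => ?_)) (hθ 0 m)
          rw [abs_mul]
          exact mul_le_mul_of_nonneg_left (hh j) (abs_nonneg _)
      _ ≤ b * c + a := by
          rw [← Finset.sum_mul]
          have := mul_le_mul_of_nonneg_right (hW 0 m) hc
          linarith
  | succ ℓ ih =>
    intro m
    rw [layerOut, layerB]
    have hσb : ∀ j : Fin (n (ℓ + 1)), |σ (layerOut σ n W θ h ℓ j)| ≤ Lσ * layerB a b c Lσ ℓ := by
      intro j
      have h1 := hlip (layerOut σ n W θ h ℓ j) 0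
      rw [hσ0, sub_zero, sub_zero] at h1
      exact h1.trans (mul_le_mul_of_nonneg_left (ih j) hLσ)
    calc |(∑ j, W (ℓ + 1) m j * σ (layerOut σ n W θ h ℓ j)) - θ (ℓ + 1) m|
        ≤ |∑ j, W (ℓ + 1) m j * σ (layerOut σ n W θ h ℓ j)| + |θ (ℓ + 1) m| := abs_sub _ _
      _ ≤ (∑ j, |W (ℓ + 1) m j| * (Lσ * layerB a b c Lσ ℓ)) + a := by
          refine add_le_add (le_trans (Finset.abs_sum_le_sum_abs _ _)
            (Finset.sum_le_sum fun j _ => ?_)) (hθ (ℓ + 1) m)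
          rw [abs_mul]
          exact mul_le_mul_of_nonneg_left (hσb j) (abs_nonneg _)
      _ ≤ b * (Lσ * layerB a b c Lσ ℓ) + a := by
          rw [← Finset.sum_mul]
          have h2 : 0 ≤ Lσ * layerB a b c Lσ ℓ :=
            mul_nonneg hLσ (layerB_nonneg ha hb hc hLσ ℓ)
          have := mul_le_mul_of_nonneg_right (hW (ℓ + 1) m) h2
          linarith

lemma abs_sum_rsign_le {N : ℕ} (s : Fin N → Bool) (f : Fin N → ℝ) (C : ℝ)
    (hf : ∀ i, |f i| ≤ C) : |∑ i, rsign (s i) * f i| ≤ N * C := by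
  calc |∑ i, rsign (s i) * f i| ≤ ∑ i, |rsign (s i) * f i| := Finset.abs_sum_le_sum_abs _ _
    _ = ∑ i, |f i| := by
        refine Finset.sum_congr rfl fun i _ => ?_
        rw [abs_mul, abs_rsign, one_mul]
    _ ≤ ∑ _i : Fin N, C := Finset.sum_le_sum fun i _ => hf i
    _ = N * C := by rw [Finset.sum_const, nsmul_eq_mul, Finset.card_univ, Fintype.card_fin]

lemma sum_rsign_linear {N k : ℕ} (s : Fin N → Bool) (w : Fin k → ℝ)
    (x : Fin N → Fin k → ℝ) (θ : ℝ) :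
    ∑ i, rsign (s i) * ((∑ j, w j * x i j) - θ)
      = (∑ j, w j * ∑ i, rsign (s i) * x i j) - θ * ∑ i, rsign (s i) := by
  have e1 : ∀ i, rsign (s i) * ((∑ j, w j * x i j) - θ)
      = (∑ j, w j * (rsign (s i) * x i j)) - rsign (s i) * θ := by
    intro i
    rw [mul_sub, Finset.mul_sum]
    congr 1
    exact Finset.sum_congr rfl fun j _ => by ring
  rw [Finset.sum_congr rfl fun i _ => e1 i, Finset.sum_sub_distrib, Finset.sum_comm]
  congr 1
  · refine Finset.sum_congr rfl fun j _ => ?_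
    rw [Finset.mul_sum]
  · rw [← Finset.sum_mul, mul_comm]

lemma abs_linear_bound {N k : ℕ} (s : Fin N → Bool) (w : Fin k → ℝ)
    (x : Fin N → Fin k → ℝ) (θ b a Y : ℝ)
    (hw : ∑ j, |w j| ≤ b) (hθ : |θ| ≤ a) (hY : 0 ≤ Y)
    (hx : ∀ j, |∑ i, rsign (s i) * x i j| ≤ Y) :
    |∑ i, rsign (s i) * ((∑ j, w j * x i j) - θ)| ≤ b * Y + a * |∑ i, rsign (s i)| := by
  rw [sum_rsign_linear]
  calc |(∑ j, w j * ∑ i, rsign (s i) * x i j) - θ * ∑ i, rsign (s i)|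
      ≤ |∑ j, w j * ∑ i, rsign (s i) * x i j| + |θ * ∑ i, rsign (s i)| := abs_sub _ _
    _ ≤ (∑ j, |w j| * Y) + a * |∑ i, rsign (s i)| := by
        refine add_le_add (le_trans (Finset.abs_sum_le_sum_abs _ _)
          (Finset.sum_le_sum fun j _ => ?_)) ?_
        · rw [abs_mul]
          exact mul_le_mul_of_nonneg_left (hx j) (abs_nonneg _)
        · rw [abs_mul]
          exact mul_le_mul_of_nonneg_right hθ (abs_nonneg _)
    _ ≤ b * Y + a * |∑ i, rsign (s i)| := by
        rw [← Finset.sum_mul]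
        have := mul_le_mul_of_nonneg_right hw hY
        linarith

abbrev NNParam (n : ℕ → ℕ) (a b : ℝ) : Type :=
  {p : (∀ ℓ : ℕ, Fin (n (ℓ + 1)) → Fin (n ℓ) → ℝ) × (∀ ℓ : ℕ, Fin (n (ℓ + 1)) → ℝ) //
    (∀ ℓ m, ∑ j, |p.1 ℓ m j| ≤ b) ∧ (∀ ℓ m, |p.2 ℓ m| ≤ a)}

noncomputable def TT (σ : ℝ → ℝ) (n : ℕ → ℕ) (a b : ℝ) {N : ℕ}
    (h : Fin N → Fin (n 0) → ℝ) (ℓ : ℕ)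
    (q : Option (NNParam n a b × Fin (n (ℓ + 1)))) (i : Fin N) : ℝ :=
  q.elim 0 fun pm => layerOut σ n pm.1.1.1 pm.1.1.2 (h i) ℓ pm.2

lemma key_bound {σ : ℝ → ℝ} {n : ℕ → ℕ} {a b c Lσ : ℝ}
    (hLσ : 0 ≤ Lσ) (hlip : ∀ s t, |σ s - σ t| ≤ Lσ * |s - t|) (hσ0 : σ 0 = 0)
    (ha : 0 ≤ a) (hb : 0 ≤ b) (hc : 0 ≤ c)
    {N : ℕ} (h : Fin N → Fin (n 0) → ℝ) (hbound : ∀ i j, |h i j| ≤ c) :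
    ∀ ℓ, ∑ s : Fin N → Bool, ⨆ q : Option (NNParam n a b × Fin (n (ℓ + 1))),
        |∑ i, rsign (s i) * TT σ n a b h ℓ q i|
      ≤ 2 ^ N * Real.sqrt N *
        ((2 * b * Lσ) ^ ℓ * (b * c * Real.sqrt (2 * Real.log (2 * n 0)))
          + (∑ j ∈ Finset.range (ℓ + 1), (2 * b * Lσ) ^ j) * a) := by
  classical
  haveI hne : Nonempty (NNParam n a b) :=
    ⟨⟨⟨fun _ _ _ => 0, fun _ _ => 0⟩,
      ⟨fun ℓ m => by simpa using hb, fun ℓ m => by simpa using ha⟩⟩⟩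
  have hTb : ∀ ℓ (q : Option (NNParam n a b × Fin (n (ℓ + 1)))) (i : Fin N),
      |TT σ n a b h ℓ q i| ≤ layerB a b c Lσ ℓ := by
    intro ℓ q i
    cases q with
    | none => simpa [TT] using layerB_nonneg ha hb hc hLσ ℓ
    | some pm =>
      exact layerOut_bound hLσ hlip hσ0 ha hb hc pm.1.2.1 pm.1.2.2 (hbound i) ℓ pm.2
  have bddS : ∀ ℓ (s : Fin N → Bool),
      BddAbove (Set.range fun q : Option (NNParam n a b × Fin (n (ℓ + 1))) =>
        |∑ i, rsign (s i) * TT σ n a b h ℓ q i|) := by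
    intro ℓ s
    exact bddAbove_of_le ((N : ℝ) * layerB a b c Lσ ℓ)
      (fun q => abs_sum_rsign_le s _ _ (hTb ℓ q))
  have khint := khintchine N
  have hsq2 : (0:ℝ) ≤ Real.sqrt (2 * Real.log (2 * n 0)) := Real.sqrt_nonneg _
  intro ℓ
  induction ℓ with
  | zero =>
    -- M s bound via Massart
    set Ms : (Fin N → Bool) → ℝ := fun s =>
      ⨆ o : Option (Fin (n 0)), |∑ i, rsign (s i) * (o.elim 0 fun j => h i j)| with hMsdef
    have bddMs : ∀ s : Fin N → Bool,
        BddAbove (Set.range fun o : Option (Fin (n 0)) =>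
          |∑ i, rsign (s i) * (o.elim 0 fun j => h i j)|) := by
      intro s
      refine bddAbove_of_le ((N : ℝ) * c) fun o => abs_sum_rsign_le s _ _ fun i => ?_
      cases o with
      | none => simpa using hc
      | some j => simpa using hbound i j
    have hMs0 : ∀ s, 0 ≤ Ms s := by
      intro s
      refine le_trans (le_of_eq ?_) (le_ciSup (bddMs s) none)
      rw [Finset.sum_eq_zero (fun i _ => by simp)]
      simp
    have persA : ∀ s : Fin N → Bool,
        (⨆ q : Option (NNParam n a b × Fin (n 1)), |∑ i, rsign (s i) * TT σ n a b h 0 q i|)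
          ≤ b * Ms s + a * |∑ i, rsign (s i)| := by
      intro s
      refine ciSup_le fun q => ?_
      cases q with
      | none =>
        rw [Finset.sum_eq_zero (fun i _ => by simp [TT])]
        have h1 : 0 ≤ b * Ms s := mul_nonneg hb (hMs0 s)
        have h2 : 0 ≤ a * |∑ i, rsign (s i)| := mul_nonneg ha (abs_nonneg _)
        simpa using add_nonneg h1 h2
      | some pm =>
        obtain ⟨p, m⟩ := pm
        have heq : ∀ i, TT σ n a b h 0 (some (p, m)) i
            = (∑ j, p.1.1 0 m j * h i j) - p.1.2 0 m := by
          intro i; simp [TT, layerOut]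
        rw [Finset.sum_congr rfl fun i _ => by rw [heq i]]
        refine abs_linear_bound s _ _ _ b a (Ms s) (p.2.1 0 m) (p.2.2 0 m) (hMs0 s) ?_
        intro j
        refine le_trans (le_of_eq ?_) (le_ciSup (bddMs s) (some j))
        simp
    have sumMs : ∑ s : Fin N → Bool, Ms s
        ≤ 2 ^ N * (c * Real.sqrt N * Real.sqrt (2 * Real.log (2 * n 0))) := by
      rcases Nat.eq_zero_or_pos (n 0) with hn0 | hn0
      · have hMz : ∀ s, Ms s = 0 := by
          intro s
          have hall : ∀ o : Option (Fin (n 0)),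
              |∑ i, rsign (s i) * (o.elim 0 fun j => h i j)| = 0 := by
            intro o
            cases o with
            | none => rw [Finset.sum_eq_zero (fun i _ => by simp)]; simp
            | some j => exact absurd j.isLt (by omega)
          rw [hMsdef]
          simp only
          rw [funext hall]
          exact ciSup_const
        rw [Finset.sum_congr rfl fun s _ => hMz s, Finset.sum_const]
        simp only [smul_zero]
        positivity
      · haveI : Nonempty (Fin (n 0)) := ⟨⟨0, hn0⟩⟩
        have bddMs' : ∀ s : Fin N → Bool,
            BddAbove (Set.range fun j : Fin (n 0) => |∑ i, rsign (s i) * h i j|) := by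
          intro s
          exact bddAbove_of_le ((N : ℝ) * c)
            (fun j => abs_sum_rsign_le s _ _ fun i => hbound i j)
        have hMle : ∀ s, Ms s ≤ ⨆ j : Fin (n 0), |∑ i, rsign (s i) * h i j| := by
          intro s
          refine ciSup_le fun o => ?_
          cases o with
          | none =>
            refine le_trans (le_of_eq ?_) (le_trans (abs_nonneg _) (le_ciSup (bddMs' s) ⟨0, hn0⟩))
            rw [Finset.sum_eq_zero (fun i _ => by simp)]; simp
          | some j =>
            refine le_trans (le_of_eq ?_) (le_ciSup (bddMs' s) j)
            simp
        have hmas := massart hn0 (fun j i => h i j) (c ^ 2 * N) ?_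
        · refine le_trans (Finset.sum_le_sum fun s _ => hMle s) (hmas.trans (le_of_eq ?_))
          congr 1
          rw [Real.sqrt_mul (sq_nonneg c), Real.sqrt_sq hc]
        · intro j
          calc ∑ i, (h i j) ^ 2 ≤ ∑ _i : Fin N, c ^ 2 := by
                refine Finset.sum_le_sum fun i _ => ?_
                have := abs_le.1 (hbound i j)
                nlinarith [this.1, this.2]
            _ = c ^ 2 * N := by
                rw [Finset.sum_const, nsmul_eq_mul, Finset.card_univ, Fintype.card_fin]; ring
    calc ∑ s : Fin N → Bool, ⨆ q : Option (NNParam n a b × Fin (n 1)),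
          |∑ i, rsign (s i) * TT σ n a b h 0 q i|
        ≤ ∑ s : Fin N → Bool, (b * Ms s + a * |∑ i, rsign (s i)|) :=
          Finset.sum_le_sum fun s _ => persA s
      _ = b * (∑ s : Fin N → Bool, Ms s) + a * ∑ s : Fin N → Bool, |∑ i, rsign (s i)| := by
          rw [Finset.sum_add_distrib, Finset.mul_sum, Finset.mul_sum]
      _ ≤ b * (2 ^ N * (c * Real.sqrt N * Real.sqrt (2 * Real.log (2 * n 0))))
            + a * (2 ^ N * Real.sqrt N) := by
          refine add_le_add (mul_le_mul_of_nonneg_left sumMs hb)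
            (mul_le_mul_of_nonneg_left khint ha)
      _ = 2 ^ N * Real.sqrt N *
            ((2 * b * Lσ) ^ 0 * (b * c * Real.sqrt (2 * Real.log (2 * n 0)))
              + (∑ j ∈ Finset.range (0 + 1), (2 * b * Lσ) ^ j) * a) := by
          rw [pow_zero, one_mul, Finset.range_one, Finset.sum_singleton, pow_zero, one_mul]
          ring
  | succ ℓ ih =>
    set Ys : (Fin N → Bool) → ℝ := fun s =>
      ⨆ q : Option (NNParam n a b × Fin (n (ℓ + 1))),
        |∑ i, rsign (s i) * σ (TT σ n a b h ℓ q i)| with hYsdef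
    have hσTb : ∀ (q : Option (NNParam n a b × Fin (n (ℓ + 1)))) (i : Fin N),
        |σ (TT σ n a b h ℓ q i)| ≤ Lσ * layerB a b c Lσ ℓ := by
      intro q i
      have h1 := hlip (TT σ n a b h ℓ q i) 0
      rw [hσ0, sub_zero, sub_zero] at h1
      exact h1.trans (mul_le_mul_of_nonneg_left (hTb ℓ q i) hLσ)
    have bddYs : ∀ s : Fin N → Bool,
        BddAbove (Set.range fun q : Option (NNParam n a b × Fin (n (ℓ + 1))) =>
          |∑ i, rsign (s i) * σ (TT σ n a b h ℓ q i)|) := by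
      intro s
      exact bddAbove_of_le ((N : ℝ) * (Lσ * layerB a b c Lσ ℓ))
        (fun q => abs_sum_rsign_le s _ _ (hσTb q))
    have hYs0 : ∀ s, 0 ≤ Ys s := by
      intro s
      refine le_trans (le_of_eq ?_) (le_ciSup (bddYs s) none)
      rw [Finset.sum_eq_zero (fun i _ => by simp [TT, hσ0])]
      simp
    have persA : ∀ s : Fin N → Bool,
        (⨆ q : Option (NNParam n a b × Fin (n (ℓ + 1 + 1))),
            |∑ i, rsign (s i) * TT σ n a b h (ℓ + 1) q i|)
          ≤ b * Ys s + a * |∑ i, rsign (s i)| := by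
      intro s
      refine ciSup_le fun q => ?_
      cases q with
      | none =>
        rw [Finset.sum_eq_zero (fun i _ => by simp [TT])]
        have h1 : 0 ≤ b * Ys s := mul_nonneg hb (hYs0 s)
        have h2 : 0 ≤ a * |∑ i, rsign (s i)| := mul_nonneg ha (abs_nonneg _)
        simpa using add_nonneg h1 h2
      | some pm =>
        obtain ⟨p, m⟩ := pm
        have heq : ∀ i, TT σ n a b h (ℓ + 1) (some (p, m)) i
            = (∑ j, p.1.1 (ℓ + 1) m j * σ (TT σ n a b h ℓ (some (p, j)) i))
                - p.1.2 (ℓ + 1) m := by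
          intro i; simp [TT, layerOut]
        rw [Finset.sum_congr rfl fun i _ => by rw [heq i]]
        refine abs_linear_bound s _ _ _ b a (Ys s) (p.2.1 (ℓ + 1) m) (p.2.2 (ℓ + 1) m)
          (hYs0 s) ?_
        intro j
        exact le_ciSup (bddYs s) (some (p, j))
    have hcontr : ∑ s : Fin N → Bool, Ys s
        ≤ 2 * Lσ * ∑ s : Fin N → Bool,
            ⨆ q : Option (NNParam n a b × Fin (n (ℓ + 1))),
              |∑ i, rsign (s i) * TT σ n a b h ℓ q i| := by
      refine contraction_abs (TT σ n a b h ℓ) (layerB a b c Lσ ℓ) (hTb ℓ) none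
        (fun i => rfl) σ Lσ hLσ hlip hσ0
    have hA0 : 0 ≤ (2 * b * Lσ) ^ ℓ * (b * c * Real.sqrt (2 * Real.log (2 * n 0)))
        + (∑ j ∈ Finset.range (ℓ + 1), (2 * b * Lσ) ^ j) * a := by
      have h1 : (0:ℝ) ≤ (2 * b * Lσ) ^ ℓ := by positivity
      have h2 : (0:ℝ) ≤ ∑ j ∈ Finset.range (ℓ + 1), (2 * b * Lσ) ^ j :=
        Finset.sum_nonneg fun j _ => by positivity
      have h3 : (0:ℝ) ≤ b * c * Real.sqrt (2 * Real.log (2 * n 0)) := by positivity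
      nlinarith
    calc ∑ s : Fin N → Bool, ⨆ q : Option (NNParam n a b × Fin (n (ℓ + 1 + 1))),
          |∑ i, rsign (s i) * TT σ n a b h (ℓ + 1) q i|
        ≤ ∑ s : Fin N → Bool, (b * Ys s + a * |∑ i, rsign (s i)|) :=
          Finset.sum_le_sum fun s _ => persA s
      _ = b * (∑ s : Fin N → Bool, Ys s) + a * ∑ s : Fin N → Bool, |∑ i, rsign (s i)| := by
          rw [Finset.sum_add_distrib, Finset.mul_sum, Finset.mul_sum]
      _ ≤ b * (2 * Lσ * (2 ^ N * Real.sqrt N *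
            ((2 * b * Lσ) ^ ℓ * (b * c * Real.sqrt (2 * Real.log (2 * n 0)))
              + (∑ j ∈ Finset.range (ℓ + 1), (2 * b * Lσ) ^ j) * a)))
            + a * (2 ^ N * Real.sqrt N) := by
          refine add_le_add (mul_le_mul_of_nonneg_left ?_ hb)
            (mul_le_mul_of_nonneg_left khint ha)
          refine hcontr.trans ?_
          have h2Lσ : (0:ℝ) ≤ 2 * Lσ := by linarith
          exact mul_le_mul_of_nonneg_left ih h2Lσ
      _ = 2 ^ N * Real.sqrt N *
            ((2 * b * Lσ) ^ (ℓ + 1) * (b * c * Real.sqrt (2 * Real.log (2 * n 0)))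
              + (∑ j ∈ Finset.range (ℓ + 1 + 1), (2 * b * Lσ) ^ j) * a) := by
          conv_rhs => rw [geom_sum_succ]
          ring


/-- Rademacher complexity of feedforward neural networks: for an `L`-layered
feedforward neural network class (layer sizes `n 1,…,n L` with `n L = 2`, input dimension
`n 0`, logit `f^{NN}(h) = g^{(L)}_1(h) − g^{(L)}_2(h)`) with all weight vectors satisfying
`‖w^{(ℓ)}_m‖₁ ≤ b`, all biases satisfying `|θ^{(ℓ)}_m| ≤ a`, inputs `‖h_i‖_∞ ≤ c`, and an
`L_σ`-Lipschitz activation with `σ(0) = 0`, the empirical Rademacher average satisfies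
`R(F^{NN}(h_1^N)) ≤ (2/√N)[(2bL_σ)^{L−1} bc √(2 log(2 n_0)) + Σ_{ℓ=0}^{L−1} (2bL_σ)^ℓ a]`.
The expectation over the i.i.d. uniform signs is written as the average over all `2^N`
sign patterns `s : Fin N → Bool`. -/
theorem rademacher_fnn
    (L : ℕ) (hL : 0 < L) (n : ℕ → ℕ) (hnL : n L = 2)
    (σ : ℝ → ℝ) (Lσ : ℝ) (hLσ : 0 ≤ Lσ)
    (hlip : ∀ s t, |σ s - σ t| ≤ Lσ * |s - t|) (hσ0 : σ 0 = 0)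
    (a b c : ℝ) (ha : 0 ≤ a) (hb : 0 ≤ b) (hc : 0 ≤ c)
    (N : ℕ) (hN : 0 < N)
    (h : Fin N → Fin (n 0) → ℝ) (hbound : ∀ i j, |h i j| ≤ c) :
    (∑ s : Fin N → Bool,
        |⨆ p : {p : (∀ ℓ : ℕ, Fin (n (ℓ + 1)) → Fin (n ℓ) → ℝ)
                  × (∀ ℓ : ℕ, Fin (n (ℓ + 1)) → ℝ) //
              (∀ ℓ m, ∑ j, |p.1 ℓ m j| ≤ b) ∧ (∀ ℓ m, |p.2 ℓ m| ≤ a)},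
          ((1 : ℝ) / N) * ∑ i, rsign (s i) *
            (layerOut σ n p.1.1 p.1.2 (h i) (L - 1)
                ⟨0, by rw [Nat.sub_add_cancel hL, hnL]; norm_num⟩
              - layerOut σ n p.1.1 p.1.2 (h i) (L - 1)
                ⟨1, by rw [Nat.sub_add_cancel hL, hnL]; norm_num⟩)|) / 2 ^ N
      ≤ (2 / Real.sqrt N) *
          ((2 * b * Lσ) ^ (L - 1) * b * c * Real.sqrt (2 * Real.log (2 * n 0))
            + ∑ ℓ ∈ Finset.range L, (2 * b * Lσ) ^ ℓ * a) := by
  classical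
  haveI hne : Nonempty (NNParam n a b) :=
    ⟨⟨⟨fun _ _ _ => 0, fun _ _ => 0⟩,
      ⟨fun ℓ m => by simpa using hb, fun ℓ m => by simpa using ha⟩⟩⟩
  set ℓ0 := L - 1 with hl0def
  have hL1 : ℓ0 + 1 = L := Nat.succ_pred_eq_of_pos hL
  set node0 : Fin (n (ℓ0 + 1)) :=
    ⟨0, by rw [Nat.sub_add_cancel hL, hnL]; norm_num⟩ with hnode0
  set node1 : Fin (n (ℓ0 + 1)) :=
    ⟨1, by rw [Nat.sub_add_cancel hL, hnL]; norm_num⟩ with hnode1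
  have hNpos : (0:ℝ) < N := by exact_mod_cast hN
  have hB0 := layerB_nonneg ha hb hc hLσ ℓ0
  have hTb : ∀ (q : Option (NNParam n a b × Fin (n (ℓ0 + 1)))) (i : Fin N),
      |TT σ n a b h ℓ0 q i| ≤ layerB a b c Lσ ℓ0 := by
    intro q i
    cases q with
    | none => simpa [TT] using hB0
    | some pm =>
      exact layerOut_bound hLσ hlip hσ0 ha hb hc pm.1.2.1 pm.1.2.2 (hbound i) ℓ0 pm.2
  have bddS : ∀ s : Fin N → Bool,
      BddAbove (Set.range fun q : Option (NNParam n a b × Fin (n (ℓ0 + 1))) =>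
        |∑ i, rsign (s i) * TT σ n a b h ℓ0 q i|) :=
    fun s => bddAbove_of_le ((N : ℝ) * layerB a b c Lσ ℓ0)
      (fun q => abs_sum_rsign_le s _ _ (hTb q))
  have main : ∀ s : Fin N → Bool,
      |⨆ p : NNParam n a b, ((1 : ℝ) / N) * ∑ i, rsign (s i) *
          (layerOut σ n p.1.1 p.1.2 (h i) ℓ0 node0
            - layerOut σ n p.1.1 p.1.2 (h i) ℓ0 node1)|
        ≤ (2 / N) * ⨆ q : Option (NNParam n a b × Fin (n (ℓ0 + 1))),
            |∑ i, rsign (s i) * TT σ n a b h ℓ0 q i| := by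
    intro s
    set Y : ℝ := ⨆ q : Option (NNParam n a b × Fin (n (ℓ0 + 1))),
        |∑ i, rsign (s i) * TT σ n a b h ℓ0 q i| with hYdef
    have hY0 : 0 ≤ Y := by
      refine le_trans (le_of_eq ?_) (le_ciSup (bddS s) none)
      rw [Finset.sum_eq_zero (fun i _ => by simp [TT])]
      simp
    set v : NNParam n a b → ℝ := fun p => ((1 : ℝ) / N) * ∑ i, rsign (s i) *
        (layerOut σ n p.1.1 p.1.2 (h i) ℓ0 node0
          - layerOut σ n p.1.1 p.1.2 (h i) ℓ0 node1) with hvdef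
    have hvle : ∀ p : NNParam n a b, v p ≤ (2 / N) * Y := by
      intro p
      have hsplit : ∑ i, rsign (s i) *
          (layerOut σ n p.1.1 p.1.2 (h i) ℓ0 node0
            - layerOut σ n p.1.1 p.1.2 (h i) ℓ0 node1)
          = (∑ i, rsign (s i) * layerOut σ n p.1.1 p.1.2 (h i) ℓ0 node0)
            - ∑ i, rsign (s i) * layerOut σ n p.1.1 p.1.2 (h i) ℓ0 node1 := by
        rw [← Finset.sum_sub_distrib]
        exact Finset.sum_congr rfl fun i _ => by ring
      have h0 : |∑ i, rsign (s i) * layerOut σ n p.1.1 p.1.2 (h i) ℓ0 node0| ≤ Y :=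
        le_ciSup (bddS s) (some (p, node0))
      have h1 : |∑ i, rsign (s i) * layerOut σ n p.1.1 p.1.2 (h i) ℓ0 node1| ≤ Y :=
        le_ciSup (bddS s) (some (p, node1))
      rw [hvdef]
      simp only
      rw [hsplit]
      have hle : (∑ i, rsign (s i) * layerOut σ n p.1.1 p.1.2 (h i) ℓ0 node0)
          - (∑ i, rsign (s i) * layerOut σ n p.1.1 p.1.2 (h i) ℓ0 node1) ≤ 2 * Y := by
        have a0 := (abs_le.1 h0).2
        have a1 := (abs_le.1 h1).1
        linarith
      have hinv : (0:ℝ) ≤ 1 / N := by positivity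
      calc ((1:ℝ)/N) * ((∑ i, rsign (s i) * layerOut σ n p.1.1 p.1.2 (h i) ℓ0 node0)
            - ∑ i, rsign (s i) * layerOut σ n p.1.1 p.1.2 (h i) ℓ0 node1)
          ≤ ((1:ℝ)/N) * (2 * Y) := mul_le_mul_of_nonneg_left hle hinv
        _ = (2 / N) * Y := by ring
    have bddv : BddAbove (Set.range v) := bddAbove_of_le ((2 / N) * Y) hvle
    have hsup0 : 0 ≤ ⨆ p, v p := by
      have hz : v ⟨⟨fun _ _ _ => 0, fun _ _ => 0⟩,
          ⟨fun ℓ m => by simpa using hb, fun ℓ m => by simpa using ha⟩⟩ = 0 := by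
        rw [hvdef]
        simp [layerOut_zero]
      exact le_trans (le_of_eq hz.symm) (le_ciSup bddv _)
    rw [abs_of_nonneg hsup0]
    exact ciSup_le hvle
  have key := key_bound hLσ hlip hσ0 ha hb hc h hbound ℓ0
  -- final arithmetic
  have hsN : (0:ℝ) < Real.sqrt N := Real.sqrt_pos.2 hNpos
  have hNs : Real.sqrt N * Real.sqrt N = (N:ℝ) := Real.mul_self_sqrt hNpos.le
  set X := Real.sqrt (2 * Real.log (2 * n 0)) with hXdef
  have hXpos : 0 ≤ X := Real.sqrt_nonneg _
  set A := (2 * b * Lσ) ^ ℓ0 * (b * c * X)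
      + (∑ j ∈ Finset.range (ℓ0 + 1), (2 * b * Lσ) ^ j) * a with hAdef
  have hAeq : (2 * b * Lσ) ^ (L - 1) * b * c * X
      + ∑ ℓ ∈ Finset.range L, (2 * b * Lσ) ^ ℓ * a = A := by
    rw [hAdef, ← hl0def, hL1, Finset.sum_mul]
    ring
  have hA0 : 0 ≤ A := by
    have h2 : (0:ℝ) ≤ ∑ j ∈ Finset.range (ℓ0 + 1), (2 * b * Lσ) ^ j :=
      Finset.sum_nonneg fun j _ => by positivity
    have h1 : (0:ℝ) ≤ (2 * b * Lσ) ^ ℓ0 := by positivity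
    have h3 : (0:ℝ) ≤ b * c * X := by positivity
    nlinarith
  rw [hAeq, div_le_iff₀ (by positivity : (0:ℝ) < 2 ^ N)]
  calc ∑ s : Fin N → Bool,
        |⨆ p : NNParam n a b, ((1 : ℝ) / N) * ∑ i, rsign (s i) *
          (layerOut σ n p.1.1 p.1.2 (h i) ℓ0 node0
            - layerOut σ n p.1.1 p.1.2 (h i) ℓ0 node1)|
      ≤ ∑ s : Fin N → Bool, (2 / N) * ⨆ q : Option (NNParam n a b × Fin (n (ℓ0 + 1))),
          |∑ i, rsign (s i) * TT σ n a b h ℓ0 q i| :=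
        Finset.sum_le_sum fun s _ => main s
    _ = (2 / N) * ∑ s : Fin N → Bool, ⨆ q : Option (NNParam n a b × Fin (n (ℓ0 + 1))),
          |∑ i, rsign (s i) * TT σ n a b h ℓ0 q i| := by rw [Finset.mul_sum]
    _ ≤ (2 / N) * (2 ^ N * Real.sqrt N * A) := by
        refine mul_le_mul_of_nonneg_left key (by positivity)
    _ = 2 / Real.sqrt N * A * 2 ^ N := by
        field_simp
        linear_combination (A : ℝ) * hNs
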